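/- arXiv:2407.07119 — 6 statements merged into one kernel-verified Lean document; each statement's English description precedes it below -/
import Mathlib

section
/- For a finite irreducible Markov chain on states {1,...,N} with transition probabilities e°_{ij} (e°_{ij} ≥ 0, ∑_j e°_{ij} may be sub-stochastic but the chain of swaps is irreducible), the system of equations ∑_j e°_{ij} v_j = ∑_j e°_{ji} v_i for all i, together with the normalization ∑_i v_i = 1, has a unique solution v (the reproductive values), and this solution satisfies v_i > 0 for all i. -/
open Finset

/-- Zero propagation and positivity for nonnegative balanced vectors. -/
lemma aux_pos (N : ℕ) (e : Fin N → Fin N → ℝ) (he0 : ∀ i j, 0 ≤ e i j)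
    (hirr : ∀ i j : Fin N, Relation.ReflTransGen (fun a b => 0 < e a b) i j)
    (v : Fin N → ℝ) (hv0 : ∀ i, 0 ≤ v i)
    (hF : ∀ i, ∑ j, e i j * v j = (∑ j, e j i) * v i)
    (hne : v ≠ 0) : ∀ i, 0 < v i := by
  have prop : ∀ i j : Fin N, Relation.ReflTransGen (fun a b => 0 < e a b) i j →
      v i = 0 → v j = 0 := by
    intro i j h
    induction h with
    | refl => exact id
    | @tail b c hab hbc ih =>
      intro h0
      have hb : v b = 0 := ih h0
      have hsum : ∑ j, e b j * v j = 0 := by rw [hF b, hb, mul_zero]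
      have hall := (Finset.sum_eq_zero_iff_of_nonneg
        (fun j _ => mul_nonneg (he0 b j) (hv0 j))).mp hsum c (Finset.mem_univ c)
      rcases mul_eq_zero.mp hall with h | h
      · exact absurd h (ne_of_gt hbc)
      · exact h
  obtain ⟨k, hk⟩ : ∃ k, v k ≠ 0 := by
    by_contra h
    push_neg at h
    exact hne (funext fun i => h i)
  intro i
  rcases lt_or_eq_of_le (hv0 i) with h | h
  · exact h
  · exact absurd (prop i k (hirr i k) h.symm) hk

/-- Sum of the defects is zero. -/
lemma aux_sum0 (N : ℕ) (e : Fin N → Fin N → ℝ) (w : Fin N → ℝ) :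
    ∑ i, (∑ j, e i j * w j - (∑ j, e j i) * w i) = 0 := by
  rw [Finset.sum_sub_distrib, sub_eq_zero]
  rw [Finset.sum_comm]
  apply Finset.sum_congr rfl
  intro j _
  rw [Finset.sum_mul]

/-- Any balanced vector has constant sign. -/
lemma aux_sign (N : ℕ) (e : Fin N → Fin N → ℝ) (he0 : ∀ i j, 0 ≤ e i j)
    (hirr : ∀ i j : Fin N, Relation.ReflTransGen (fun a b => 0 < e a b) i j)
    (u : Fin N → ℝ)
    (hF : ∀ i, ∑ j, e i j * u j = (∑ j, e j i) * u i) :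
    (∀ i, 0 ≤ u i) ∨ (∀ i, u i ≤ 0) := by
  set up : Fin N → ℝ := fun i => max (u i) 0 with hup
  have hup0 : ∀ i, 0 ≤ up i := fun i => le_max_right _ _
  have hg0 : ∀ i, 0 ≤ ∑ j, e i j * up j - (∑ j, e j i) * up i := by
    intro i
    rcases le_or_gt (u i) 0 with h | h
    · have : up i = 0 := max_eq_right h
      rw [this, mul_zero, sub_zero]
      exact Finset.sum_nonneg fun j _ => mul_nonneg (he0 i j) (hup0 j)
    · have : up i = u i := max_eq_left h.le
      rw [this, ← hF i, ← Finset.sum_sub_distrib]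
      apply Finset.sum_nonneg
      intro j _
      rw [← mul_sub]
      exact mul_nonneg (he0 i j) (by simp [hup, le_max_left])
  have hgsum := aux_sum0 N e up
  have hgz : ∀ i, ∑ j, e i j * up j - (∑ j, e j i) * up i = 0 := by
    intro i
    exact (Finset.sum_eq_zero_iff_of_nonneg (fun i _ => hg0 i)).mp hgsum i (Finset.mem_univ i)
  have hFup : ∀ i, ∑ j, e i j * up j = (∑ j, e j i) * up i := by
    intro i; linarith [hgz i]
  by_cases hz : up = 0
  · right
    intro i
    have := congrFun hz i
    simp only [hup] at this
    by_contra h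
    push_neg at h
    simp [max_eq_left h.le] at this
    linarith
  · left
    intro i
    have := aux_pos N e he0 hirr up hup0 hFup hz i
    by_contra h
    push_neg at h
    simp only [hup] at this
    rw [max_eq_right h.le] at this
    exact lt_irrefl 0 this

/-- For a finite irreducible nonnegative rate matrix `e°` on `Fin N`,
the reproductive-value system `∑_j e°_{ij} v_j = ∑_j e°_{ji} v_i` (for all `i`)
together with `∑_i v_i = 1` has a unique solution, and it is strictly positive. -/
theorem reproductive_values_exist_unique_pos (N : ℕ) (hN : 1 ≤ N)
    (e : Fin N → Fin N → ℝ) (he0 : ∀ i j, 0 ≤ e i j)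
    (hirr : ∀ i j : Fin N, Relation.ReflTransGen (fun a b => 0 < e a b) i j) :
    ∃ v : Fin N → ℝ,
      ((∀ i, ∑ j, e i j * v j = ∑ j, e j i * v i) ∧ ∑ i, v i = 1) ∧
      (∀ i, 0 < v i) ∧
      ∀ w : Fin N → ℝ,
        ((∀ i, ∑ j, e i j * w j = ∑ j, e j i * w i) ∧ ∑ i, w i = 1) → w = v := by
  -- the matrix
  set M : Matrix (Fin N) (Fin N) ℝ :=
    Matrix.of fun i j => e i j - if i = j then (∑ k, e k i) else 0 with hM
  have hmulVec : ∀ (w : Fin N → ℝ) (i : Fin N),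
      M.mulVec w i = ∑ j, e i j * w j - (∑ j, e j i) * w i := by
    intro w i
    simp only [hM, Matrix.mulVec, dotProduct, Matrix.of_apply, sub_mul,
      Finset.sum_sub_distrib, ite_mul, zero_mul]
    congr 1
    rw [Finset.sum_ite_eq Finset.univ i (fun j => (∑ k, e k i) * w j)]
    simp
  -- M is singular
  have h1ne : (1 : Fin N → ℝ) ≠ 0 := by
    intro h
    have := congrFun h ⟨0, hN⟩
    simp at this
  have hT : M.transpose.mulVec 1 = 0 := by
    funext j
    simp only [Matrix.mulVec, dotProduct, Matrix.transpose_apply, Pi.one_apply,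
      mul_one, hM, Matrix.of_apply, Finset.sum_sub_distrib, Pi.zero_apply]
    rw [Finset.sum_ite_eq' Finset.univ j (fun x => ∑ k, e k x)]
    simp
  have hdet : M.det = 0 := by
    have := Matrix.exists_mulVec_eq_zero_iff.mp ⟨1, h1ne, hT⟩
    rwa [Matrix.det_transpose] at this
  obtain ⟨u, hu0, huker⟩ := Matrix.exists_mulVec_eq_zero_iff.mpr hdet
  have hFu : ∀ i, ∑ j, e i j * u j = (∑ j, e j i) * u i := by
    intro i
    have := congrFun huker i
    rw [hmulVec] at this
    simp only [Pi.zero_apply] at this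
    linarith
  -- get a nonnegative nonzero kernel element
  have hex : ∃ w : Fin N → ℝ, w ≠ 0 ∧ (∀ i, 0 ≤ w i) ∧
      (∀ i, ∑ j, e i j * w j = (∑ j, e j i) * w i) := by
    rcases aux_sign N e he0 hirr u hFu with h | h
    · exact ⟨u, hu0, h, hFu⟩
    · refine ⟨-u, ?_, fun i => by simpa using h i, ?_⟩
      · simpa [neg_eq_zero] using hu0
      · intro i
        simp only [Pi.neg_apply, mul_neg, Finset.sum_neg_distrib]
        rw [hFu i]
  obtain ⟨w, hwne, hw0, hFw⟩ := hex
  have hwpos := aux_pos N e he0 hirr w hw0 hFw hwne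
  have hspos : 0 < ∑ i, w i := by
    have : (⟨0, hN⟩ : Fin N) ∈ Finset.univ := Finset.mem_univ _
    exact Finset.sum_pos (fun i _ => hwpos i) ⟨⟨0, hN⟩, this⟩
  set s := ∑ i, w i with hs
  set v : Fin N → ℝ := fun i => w i / s with hv
  have hFv : ∀ i, ∑ j, e i j * v j = (∑ j, e j i) * v i := by
    intro i
    simp only [hv, div_eq_mul_inv, ← mul_assoc]
    rw [← Finset.sum_mul, hFw i]
  have hvsum : ∑ i, v i = 1 := by
    simp only [hv]
    rw [← Finset.sum_div, ← hs, div_self (ne_of_gt hspos)]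
  refine ⟨v, ⟨?_, hvsum⟩, ?_, ?_⟩
  · intro i
    rw [← Finset.sum_mul] -- hope it targets RHS
    exact hFv i
  · intro i
    exact div_pos (hwpos i) hspos
  · intro x ⟨hxF, hxsum⟩
    have hFx : ∀ i, ∑ j, e i j * x j = (∑ j, e j i) * x i := by
      intro i
      rw [hxF i, Finset.sum_mul]
    set d : Fin N → ℝ := fun i => x i - v i with hd
    have hFd : ∀ i, ∑ j, e i j * d j = (∑ j, e j i) * d i := by
      intro i
      simp only [hd, mul_sub, Finset.sum_sub_distrib]
      rw [hFx i, hFv i]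
    have hdsum : ∑ i, d i = 0 := by
      simp only [hd]
      rw [Finset.sum_sub_distrib, hxsum, hvsum, sub_self]
    have hdz : d = 0 := by
      by_contra hdz
      rcases aux_sign N e he0 hirr d hFd with h | h
      · have := aux_pos N e he0 hirr d h hFd hdz
        have : 0 < ∑ i, d i :=
          Finset.sum_pos (fun i _ => this i) ⟨⟨0, hN⟩, Finset.mem_univ _⟩
        linarith
      · have hnd : (fun i => -d i) ≠ 0 := by
          intro hc
          apply hdz
          funext i
          have := congrFun hc i
          simp at this
          simpa using this
        have hFnd : ∀ i, ∑ j, e i j * (-d j) = (∑ j, e j i) * (-d i) := by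
          intro i
          simp only [mul_neg, Finset.sum_neg_distrib]
          rw [hFd i]
        have hpos := aux_pos N e he0 hirr (fun i => -d i) (fun i => by simpa using h i) hFnd hnd
        have : 0 < ∑ i, -d i :=
          Finset.sum_pos (fun i _ => hpos i) ⟨⟨0, hN⟩, Finset.mem_univ _⟩
        rw [Finset.sum_neg_distrib, hdsum] at this
        simp at this
    funext i
    have := congrFun hdz i
    simp only [hd, Pi.zero_apply, sub_eq_zero] at this
    exact this
end

section
/- For the RV-weighted frequency ŝ = ∑_i v_i s_i, the one-step expected change under neutral drift is zero: if the state updates by copying, s'_i = s_{f(i)} for i in the update set Q and s'_i = s_i otherwise, and replacement events occur with neutral probabilities, then E[ŝ' − ŝ | s] = ∑_i v_i ∑_j (s_j − s_i) e°_{ji}(s) = 0 for all states s. Hence (ŝ_t) is a martingale under neutral drift. -/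
/-- Under neutral drift, the one-step expected change of the
RV-weighted frequency `ŝ = ∑ i, v i * s i` is zero in every state:
`∑ i, v i * ∑ j, (s j − s i) * e°_{ji} = 0`, so `(ŝ_t)` is a martingale. -/
theorem neutral_rv_weighted_frequency_martingale (N : ℕ)
    (e : Fin N → Fin N → ℝ) (v : Fin N → ℝ)
    (hbal : ∀ i, ∑ j, e i j * v j = ∑ j, e j i * v i)
    (hv : ∑ i, v i = 1) :
    ∀ s : Fin N → ℝ, (∀ k, s k = 0 ∨ s k = 1) →
      ∑ i, v i * ∑ j, (s j - s i) * e j i = 0 := by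
  intro s _
  have key : ∑ i, v i * ∑ j, (s j - s i) * e j i
      = (∑ i, ∑ j, s j * (e j i * v i)) - (∑ i, s i * ∑ j, e j i * v i) := by
    rw [← Finset.sum_sub_distrib]
    congr 1
    ext i
    rw [Finset.mul_sum, Finset.mul_sum, ← Finset.sum_sub_distrib]
    congr 1; ext j; ring
  rw [key, Finset.sum_comm]
  have h1 : ∀ j, ∑ i, s j * (e j i * v i) = s j * ∑ i, e i j * v j := by
    intro j
    rw [← (hbal j), Finset.mul_sum]
  have h2 : ∀ i, s i * ∑ j, e j i * v i = s i * ∑ j, e i j * v j := by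
    intro i; rw [hbal i]
  simp_rw [h1, h2]
  ring
end

section
/- With the amended Markov chain P^{ame(η)} as above, let π_{ame(η)} denote its unique stationary distribution. Then as μ → 0⁺, π_{ame(η)}(s) converges to: the fixation probability ρ_{C×C}(η) if s = C×C; ρ_{C×D}(η) if s = C×D; ρ_{D×C}(η) if s = D×C; ρ_{D×D}(η) if s = D×D; and 0 for every other state s. Here ρ_A(η) is the probability that the original chain started at η is absorbed in state A. -/
open Finset Matrix Filter

section aux
variable {S : Type*} [Fintype S] [DecidableEq S]

lemma aux_pow_nonneg (P : Matrix S S ℝ) (hP0 : ∀ s t, 0 ≤ P s t) :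
    ∀ n s t, 0 ≤ (P ^ n) s t := by
  intro n
  induction n with
  | zero => intro s t; simp [Matrix.one_apply]; split <;> norm_num
  | succ n ih =>
    intro s t
    rw [pow_succ, Matrix.mul_apply]
    exact Finset.sum_nonneg fun u _ => mul_nonneg (ih s u) (hP0 u t)

lemma aux_pow_rowsum (P : Matrix S S ℝ) (hP1 : ∀ s, ∑ t, P s t = 1) :
    ∀ n s, ∑ t, (P ^ n) s t = 1 := by
  intro n
  induction n with
  | zero => intro s; simp [Matrix.one_apply]
  | succ n ih =>
    intro s
    simp only [pow_succ, Matrix.mul_apply]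
    rw [Finset.sum_comm]
    calc ∑ u, ∑ t, (P ^ n) s u * P u t = ∑ u, (P ^ n) s u * ∑ t, P u t := by
          simp [Finset.mul_sum]
      _ = 1 := by simp only [hP1, mul_one]; exact ih s

lemma exists_habs (P : Matrix S S ℝ) (hP0 : ∀ s t, 0 ≤ P s t) (hP1 : ∀ s, ∑ t, P s t = 1)
    (A : Finset S) (habs : ∀ a ∈ A, ∀ t, P a t = if t = a then 1 else 0)
    (hre : ∀ s, s ∉ A → ∃ n, 0 < ∑ a ∈ A, (P ^ n) s a)
    (η : S) (hη : η ∉ A) :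
    ∃ h : S → ℝ, (∀ a ∈ A, h a = 0) ∧ ∀ s, s ∉ A → h s = 1 + ∑ t, P s t * h t := by
  classical
  set Q : Matrix S S ℝ := Matrix.of (fun s t => if s ∈ A ∨ t ∈ A then 0 else P s t) with hQdef
  have hQ0 : ∀ s t, 0 ≤ Q s t := by
    intro s t; simp only [hQdef, Matrix.of_apply]; split
    · exact le_refl 0
    · exact hP0 s t
  have hQP : ∀ s t, Q s t ≤ P s t := by
    intro s t; simp only [hQdef, Matrix.of_apply]; split
    · exact hP0 s t
    · exact le_refl _
  have hQpow0 : ∀ n s t, 0 ≤ (Q ^ n) s t := by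
    intro n
    induction n with
    | zero => intro s t; simp [Matrix.one_apply]; split <;> norm_num
    | succ n ih => intro s t; rw [pow_succ, Matrix.mul_apply]
                   exact Finset.sum_nonneg fun u _ => mul_nonneg (ih s u) (hQ0 u t)
  have hQpow_le : ∀ n s t, (Q ^ n) s t ≤ (P ^ n) s t := by
    intro n
    induction n with
    | zero => intro s t; simp
    | succ n ih =>
      intro s t
      rw [pow_succ, pow_succ, Matrix.mul_apply, Matrix.mul_apply]
      exact Finset.sum_le_sum fun u _ =>
        mul_le_mul (ih s u) (hQP u t) (hQ0 u t) (aux_pow_nonneg P hP0 n s u)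
  -- monotone absorption mass
  have hbmono : ∀ s, Monotone (fun n => ∑ a ∈ A, (P ^ n) s a) := by
    intro s
    apply monotone_nat_of_le_succ
    intro n
    apply Finset.sum_le_sum
    intro a ha
    rw [pow_succ, Matrix.mul_apply]
    have h1 : (P ^ n) s a * P a a ≤ ∑ u, (P ^ n) s u * P u a :=
      Finset.single_le_sum (f := fun u => (P ^ n) s u * P u a)
        (fun u _ => mul_nonneg (aux_pow_nonneg P hP0 n s u) (hP0 u a)) (mem_univ a)
    rwa [habs a ha a, if_pos rfl, mul_one] at h1
  have hch : ∀ s, ∃ n : ℕ, s ∉ A → 0 < ∑ a ∈ A, (P ^ n) s a := by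
    intro s
    by_cases hs : s ∈ A
    · exact ⟨0, fun h => absurd hs h⟩
    · obtain ⟨n, hn⟩ := hre s hs; exact ⟨n, fun _ => hn⟩
  choose F hF using hch
  set N : ℕ := (Finset.univ.sup F) + 1 with hNdef
  have hβN : ∀ s, s ∉ A → 0 < ∑ a ∈ A, (P ^ N) s a := by
    intro s hs
    exact lt_of_lt_of_le (hF s hs)
      (hbmono s (le_trans (Finset.le_sup (mem_univ s)) (Nat.le_succ _)))
  set TT : Finset S := Finset.univ.filter (fun s => s ∉ A) with hTTdef
  have hTne : TT.Nonempty := ⟨η, by simp [hTTdef, hη]⟩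
  set α : ℝ := TT.inf' hTne (fun s => ∑ a ∈ A, (P ^ N) s a) with hαdef
  have hα : 0 < α := by
    rw [hαdef, Finset.lt_inf'_iff]
    intro s hs
    exact hβN s (by simpa [hTTdef] using hs)
  have hrow : ∀ s, s ∉ A → ∑ t, (Q ^ N) s t ≤ 1 - α := by
    intro s hs
    have hsplit : ∑ t ∈ A, (P ^ N) s t + ∑ t ∈ Aᶜ, (P ^ N) s t = 1 := by
      rw [Finset.sum_add_sum_compl]; exact aux_pow_rowsum P hP1 N s
    have hqA : ∀ t ∈ A, (Q ^ N) s t = 0 := by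
      intro t ht
      rw [hNdef, pow_succ, Matrix.mul_apply]
      apply Finset.sum_eq_zero
      intro u _
      have : Q u t = 0 := by simp [hQdef, ht]
      rw [this, mul_zero]
    have hle : α ≤ ∑ a ∈ A, (P ^ N) s a :=
      Finset.inf'_le (fun s => ∑ a ∈ A, (P ^ N) s a) (by simp [hTTdef, hs])
    calc ∑ t, (Q ^ N) s t = ∑ t ∈ A, (Q ^ N) s t + ∑ t ∈ Aᶜ, (Q ^ N) s t := by
          rw [Finset.sum_add_sum_compl]
      _ = ∑ t ∈ Aᶜ, (Q ^ N) s t := by rw [Finset.sum_eq_zero hqA, zero_add]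
      _ ≤ ∑ t ∈ Aᶜ, (P ^ N) s t := Finset.sum_le_sum fun t _ => hQpow_le N s t
      _ ≤ 1 - α := by linarith
  -- injectivity of (id - Q∗)
  have hker : ∀ x : S → ℝ, x = Q.mulVec x → x = 0 := by
    intro x hx
    have hxn : ∀ n, x = (Q ^ n).mulVec x := by
      intro n
      induction n with
      | zero => simp
      | succ n ih =>
        rw [pow_succ, ← Matrix.mulVec_mulVec, ← hx]
        exact ih
    obtain ⟨s₀, _, hs₀⟩ := Finset.exists_max_image Finset.univ (fun s => |x s|) ⟨η, mem_univ η⟩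
    have hmax : ∀ s, |x s| ≤ |x s₀| := fun s => hs₀ s (mem_univ s)
    have hx0 : |x s₀| ≤ 0 := by
      by_cases hs : s₀ ∈ A
      · have h1 : x s₀ = 0 := by
          have h2 : x s₀ = ∑ t, Q s₀ t * x t := by
            conv_lhs => rw [hx]
            rfl
          rw [h2]
          apply Finset.sum_eq_zero
          intro t _
          have : Q s₀ t = 0 := by simp [hQdef, hs]
          rw [this, zero_mul]
        simp [h1]
      · have h1 : x s₀ = ∑ t, (Q ^ N) s₀ t * x t := by
          conv_lhs => rw [hxn N]
          rfl
        have h2 : |x s₀| ≤ (1 - α) * |x s₀| := by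
          calc |x s₀| = |∑ t, (Q ^ N) s₀ t * x t| := by rw [← h1]
            _ ≤ ∑ t, |(Q ^ N) s₀ t * x t| := Finset.abs_sum_le_sum_abs _ _
            _ ≤ ∑ t, (Q ^ N) s₀ t * |x s₀| := by
                apply Finset.sum_le_sum
                intro t _
                rw [abs_mul, abs_of_nonneg (hQpow0 N s₀ t)]
                exact mul_le_mul_of_nonneg_left (hmax t) (hQpow0 N s₀ t)
            _ = (∑ t, (Q ^ N) s₀ t) * |x s₀| := by rw [Finset.sum_mul]
            _ ≤ (1 - α) * |x s₀| := mul_le_mul_of_nonneg_right (hrow s₀ hs) (abs_nonneg _)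
        nlinarith [abs_nonneg (x s₀)]
    have hz : ∀ s, x s = 0 := fun s =>
      abs_eq_zero.mp (le_antisymm (le_trans (hmax s) hx0) (abs_nonneg _))
    funext s; exact hz s
  set L : (S → ℝ) →ₗ[ℝ] (S → ℝ) := LinearMap.id - Q.mulVecLin with hLdef
  have hinj : Function.Injective L := by
    intro x y hxy
    have h1 : x - y = Q.mulVec (x - y) := by
      have h2 : x - Q.mulVec x = y - Q.mulVec y := by
        have := hxy
        simpa [hLdef, LinearMap.sub_apply, Matrix.mulVecLin_apply] using this
      have := Matrix.mulVec_sub Q x y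
      funext t
      have e2 := congrFun h2 t
      have e3 := congrFun this t
      simp only [Pi.sub_apply] at e2 e3 ⊢
      rw [e3]
      linarith
    have := hker (x - y) h1
    exact sub_eq_zero.mp this
  have hsurj : Function.Surjective L := (LinearMap.injective_iff_surjective).mp hinj
  obtain ⟨h, hLh⟩ := hsurj (fun s => if s ∈ A then 0 else 1)
  have hfun : ∀ s, h s - ∑ t, Q s t * h t = if s ∈ A then 0 else 1 := by
    intro s
    have := congrFun hLh s
    simpa [hLdef, LinearMap.sub_apply, Matrix.mulVecLin_apply, Matrix.mulVec, dotProduct]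
      using this
  have hh0 : ∀ a ∈ A, h a = 0 := by
    intro a ha
    have := hfun a
    rw [if_pos ha] at this
    have hz : ∑ t, Q a t * h t = 0 :=
      Finset.sum_eq_zero fun t _ => by
        have : Q a t = 0 := by simp [hQdef, ha]
        rw [this, zero_mul]
    linarith [this, hz]
  refine ⟨h, hh0, ?_⟩
  intro s hs
  have h1 := hfun s
  rw [if_neg hs] at h1
  have h2 : ∑ t, Q s t * h t = ∑ t, P s t * h t := by
    apply Finset.sum_congr rfl
    intro t _
    by_cases ht : t ∈ A
    · simp [hQdef, ht, hh0 t ht]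
    · simp [hQdef, hs, ht]
  linarith [h1, h2.symm]

end aux

lemma key_identity {S : Type*} [Fintype S] [DecidableEq S]
    (A : Finset S) (P : Matrix S S ℝ) (η : S) (hη : η ∉ A) (μ : ℝ)
    (p : S → ℝ) (f : S → ℝ)
    (hst : ∀ t, ∑ s, p s *
      (if s ∈ A then (if t = η then μ else if t = s then 1 - μ else 0) else P s t) = p t) :
    ∑ a ∈ A, p a * f a + ∑ t ∈ Aᶜ, p t * f t
      = ∑ a ∈ A, p a * (μ * f η + (1 - μ) * f a)
        + ∑ s ∈ Aᶜ, p s * (∑ t, P s t * f t) := by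
  classical
  have h1 : ∑ t, p t * f t
      = ∑ s, p s * ∑ t, (if s ∈ A then (if t = η then μ else if t = s then 1 - μ else 0)
          else P s t) * f t := by
    rw [show (∑ t, p t * f t)
        = ∑ t, (∑ s, p s * (if s ∈ A then (if t = η then μ else if t = s then 1 - μ else 0)
            else P s t)) * f t from Finset.sum_congr rfl (fun t _ => by rw [hst t])]
    simp_rw [Finset.sum_mul]
    rw [Finset.sum_comm]
    apply Finset.sum_congr rfl
    intro s _
    rw [Finset.mul_sum]
    exact Finset.sum_congr rfl fun t _ => by ring
  have h2 : ∀ s ∈ A, (∑ t, (if s ∈ A then (if t = η then μ else if t = s then 1 - μ else 0)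
      else P s t) * f t) = μ * f η + (1 - μ) * f s := by
    intro s hs
    have hsη : s ≠ η := fun h => hη (h ▸ hs)
    simp only [if_pos hs]
    rw [show (∑ t, (if t = η then μ else if t = s then 1 - μ else 0) * f t)
        = ∑ t, ((if t = η then μ * f η else 0) + (if t = s then (1 - μ) * f s else 0)) from
      Finset.sum_congr rfl fun t _ => by
        by_cases ht1 : t = η
        · subst ht1
          rw [if_pos rfl, if_pos rfl, if_neg (fun h => hsη h.symm), add_zero]
        · by_cases ht2 : t = s
          · subst ht2
            rw [if_neg ht1, if_pos rfl, if_neg ht1, if_pos rfl, zero_add]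
          · rw [if_neg ht1, if_neg ht2, if_neg ht1, if_neg ht2, zero_mul, add_zero]]
    rw [Finset.sum_add_distrib, Finset.sum_ite_eq' Finset.univ η, Finset.sum_ite_eq' Finset.univ s,
      if_pos (mem_univ η), if_pos (mem_univ s)]
  calc ∑ a ∈ A, p a * f a + ∑ t ∈ Aᶜ, p t * f t = ∑ t, p t * f t :=
        Finset.sum_add_sum_compl A _
    _ = ∑ s, p s * ∑ t, (if s ∈ A then (if t = η then μ else if t = s then 1 - μ else 0)
          else P s t) * f t := h1
    _ = ∑ s ∈ A, (p s * ∑ t, (if s ∈ A then (if t = η then μ else if t = s then 1 - μ else 0)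
            else P s t) * f t)
        + ∑ s ∈ Aᶜ, (p s * ∑ t, (if s ∈ A then (if t = η then μ else if t = s then 1 - μ else 0)
            else P s t) * f t) := (Finset.sum_add_sum_compl A _).symm
    _ = ∑ a ∈ A, p a * (μ * f η + (1 - μ) * f a) + ∑ s ∈ Aᶜ, p s * (∑ t, P s t * f t) := by
        congr 1
        · exact Finset.sum_congr rfl fun s hs => by rw [h2 s hs]
        · apply Finset.sum_congr rfl
          intro s hs
          have hs' : s ∉ A := by simpa using hs
          simp only [if_neg hs']



/-- As the mutation rate `μ → 0⁺`, the stationary distribution of the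
amended chain `P^{ame(η)}` converges, at each state, to the corresponding fixation
(absorption) probability of the original chain started at `η` — at the four
absorbing monomorphic states — and to `0` at every other state. -/
theorem amended_stationary_tendsto_fixation_probabilities
    {S : Type*} [Fintype S] [DecidableEq S]
    (P : Matrix S S ℝ)
    (hP0 : ∀ s t, 0 ≤ P s t) (hP1 : ∀ s, ∑ t, P s t = 1)
    (CC CD DC DD : S) (A : Finset S) (hA : A = {CC, CD, DC, DD}) (hcard : A.card = 4)
    (habs : ∀ a ∈ A, ∀ t, P a t = if t = a then 1 else 0)
    (hreach : ∀ s, s ∉ A → ∀ a ∈ A, ∃ n : ℕ, 0 < (P ^ n) s a)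
    (η : S) (hη : η ∉ A)
    -- ρ a s is the probability of absorption in `a` starting from `s`,
    -- characterized by its boundary values and harmonicity
    (ρ : S → S → ℝ)
    (hρbd : ∀ a ∈ A, ∀ a' ∈ A, ρ a a' = if a' = a then 1 else 0)
    (hρh : ∀ a ∈ A, ∀ s, s ∉ A → ρ a s = ∑ t, P s t * ρ a t)
    -- π μ is a stationary distribution of the amended chain with mutation rate μ
    (π : ℝ → S → ℝ)
    (hπ : ∀ μ ∈ Set.Ioo (0 : ℝ) 1,
      (∀ s, 0 ≤ π μ s) ∧ (∑ s, π μ s = 1) ∧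
      (∀ t, ∑ s, π μ s *
        (if s ∈ A then (if t = η then μ else if t = s then 1 - μ else 0) else P s t)
        = π μ t)) :
    ∀ s : S, Filter.Tendsto (fun μ => π μ s) (nhdsWithin 0 (Set.Ioi 0))
      (nhds (if s = CC then ρ CC η else if s = CD then ρ CD η
        else if s = DC then ρ DC η else if s = DD then ρ DD η else 0)) := by
  classical
  have hCC : CC ∈ A := by rw [hA]; simp
  have hCD : CD ∈ A := by rw [hA]; simp
  have hDC : DC ∈ A := by rw [hA]; simp
  have hDD : DD ∈ A := by rw [hA]; simp
  -- distinctness of the four states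
  have card3 : ∀ a b c : S, ({a, b, c} : Finset S).card ≤ 3 := by
    intro a b c
    apply le_trans (Finset.card_insert_le _ _)
    apply Nat.succ_le_succ
    apply le_trans (Finset.card_insert_le _ _)
    exact Nat.succ_le_succ (le_of_eq (Finset.card_singleton c))
  have card2 : ∀ a b : S, ({a, b} : Finset S).card ≤ 2 := by
    intro a b
    apply le_trans (Finset.card_insert_le _ _)
    exact Nat.succ_le_succ (le_of_eq (Finset.card_singleton b))
  have h4 : ({CC, CD, DC, DD} : Finset S).card = 4 := hA ▸ hcard
  have h1mem : CC ∉ ({CD, DC, DD} : Finset S) := by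
    intro hmem
    rw [show ({CC, CD, DC, DD} : Finset S) = {CD, DC, DD} from Finset.insert_eq_self.mpr hmem]
      at h4
    have := card3 CD DC DD; omega
  have h3 : ({CD, DC, DD} : Finset S).card = 3 := by
    rw [show ({CC, CD, DC, DD} : Finset S) = insert CC {CD, DC, DD} from rfl,
      Finset.card_insert_of_notMem h1mem] at h4
    omega
  have h2mem : CD ∉ ({DC, DD} : Finset S) := by
    intro hmem
    rw [show ({CD, DC, DD} : Finset S) = {DC, DD} from Finset.insert_eq_self.mpr hmem] at h3
    have := card2 DC DD; omega
  have h2card : ({DC, DD} : Finset S).card = 2 := by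
    rw [show ({CD, DC, DD} : Finset S) = insert CD {DC, DD} from rfl,
      Finset.card_insert_of_notMem h2mem] at h3
    omega
  have hDCDD : DC ≠ DD := by
    intro hmem
    rw [show ({DC, DD} : Finset S) = {DD} from by rw [hmem]; exact Finset.pair_eq_singleton DD] at h2card
    simp at h2card
  simp only [Finset.mem_insert, Finset.mem_singleton] at h1mem h2mem
  push_neg at h1mem h2mem
  obtain ⟨hCCCD, hCCDC, hCCDD⟩ := h1mem
  obtain ⟨hCDDC, hCDDD⟩ := h2mem
  -- absorption-time function h
  obtain ⟨h, hh0, hhs⟩ := exists_habs P hP0 hP1 A habs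
    (fun s hs => by
      obtain ⟨n, hn⟩ := hreach s hs CC hCC
      exact ⟨n, lt_of_lt_of_le hn (Finset.single_le_sum
        (fun a _ => aux_pow_nonneg P hP0 n s a) hCC)⟩) η hη
  -- key exact formulas
  have hπa : ∀ μ ∈ Set.Ioo (0:ℝ) 1, ∀ a ∈ A, π μ a = ρ a η * ∑ b ∈ A, π μ b := by
    intro μ hμ a ha
    obtain ⟨hpos, hsum, hst⟩ := hπ μ hμ
    have key := key_identity A P η hη μ (π μ) (ρ a) hst
    have e1 : ∑ b ∈ A, π μ b * ρ a b = π μ a := by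
      rw [show ∑ b ∈ A, π μ b * ρ a b = ∑ b ∈ A, (if b = a then π μ b else 0) from
        Finset.sum_congr rfl fun b hb => by rw [hρbd a ha b hb]; split_ifs <;> ring]
      rw [Finset.sum_ite_eq' A a, if_pos ha]
    have e2 : ∑ t ∈ Aᶜ, π μ t * (∑ u, P t u * ρ a u) = ∑ t ∈ Aᶜ, π μ t * ρ a t :=
      Finset.sum_congr rfl fun t ht => by
        rw [← hρh a ha t (by simpa using ht)]
    have e3 : ∑ b ∈ A, π μ b * (μ * ρ a η + (1 - μ) * ρ a b)
        = μ * ρ a η * ∑ b ∈ A, π μ b + (1 - μ) * π μ a := by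
      rw [show ∑ b ∈ A, π μ b * (μ * ρ a η + (1 - μ) * ρ a b)
          = ∑ b ∈ A, (μ * ρ a η * π μ b + (1 - μ) * (π μ b * ρ a b)) from
        Finset.sum_congr rfl fun b _ => by ring]
      rw [Finset.sum_add_distrib, ← Finset.mul_sum, ← Finset.mul_sum, e1]
    rw [e1, e2, e3] at key
    have hμ0 : (0:ℝ) < μ := hμ.1
    have h' : μ * π μ a = μ * (ρ a η * ∑ b ∈ A, π μ b) := by ring_nf; ring_nf at key; nlinarith [key]
    exact mul_left_cancel₀ (ne_of_gt hμ0) h'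
  have hT : ∀ μ ∈ Set.Ioo (0:ℝ) 1,
      ∑ t ∈ Aᶜ, π μ t = μ * h η * ∑ b ∈ A, π μ b := by
    intro μ hμ
    obtain ⟨hpos, hsum, hst⟩ := hπ μ hμ
    have key := key_identity A P η hη μ (π μ) h hst
    have e1 : ∑ b ∈ A, π μ b * h b = 0 :=
      Finset.sum_eq_zero fun b hb => by rw [hh0 b hb, mul_zero]
    have e2 : ∑ b ∈ A, π μ b * (μ * h η + (1 - μ) * h b) = μ * h η * ∑ b ∈ A, π μ b := by
      rw [show ∑ b ∈ A, π μ b * (μ * h η + (1 - μ) * h b)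
          = ∑ b ∈ A, (μ * h η) * π μ b from
        Finset.sum_congr rfl fun b hb => by rw [hh0 b hb]; ring]
      rw [← Finset.mul_sum]
    have e3 : ∑ t ∈ Aᶜ, π μ t * (∑ u, P t u * h u)
        = ∑ t ∈ Aᶜ, (π μ t * h t - π μ t) :=
      Finset.sum_congr rfl fun t ht => by
        have h5 := hhs t (by simpa using ht)
        rw [show (∑ u, P t u * h u) = h t - 1 from by linarith]
        ring
    rw [e1, e2, e3, Finset.sum_sub_distrib] at key
    linarith
  have hM01 : ∀ μ ∈ Set.Ioo (0:ℝ) 1,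
      0 ≤ ∑ b ∈ A, π μ b ∧ ∑ b ∈ A, π μ b ≤ 1 := by
    intro μ hμ
    obtain ⟨hpos, hsum, _⟩ := hπ μ hμ
    constructor
    · exact Finset.sum_nonneg fun b _ => hpos b
    · rw [← hsum]
      exact Finset.sum_le_sum_of_subset_of_nonneg (Finset.subset_univ A)
        (fun b _ _ => hpos b)
  have hIoo : Set.Ioo (0:ℝ) 1 ∈ nhdsWithin 0 (Set.Ioi 0) :=
    Ioo_mem_nhdsGT_of_mem (by constructor <;> norm_num)
  -- the transient mass tends to 0
  have hg : Filter.Tendsto (fun μ : ℝ => μ * |h η|) (nhdsWithin 0 (Set.Ioi 0)) (nhds 0) := by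
    have h1 : Filter.Tendsto (fun μ : ℝ => μ * |h η|) (nhds 0) (nhds (0 * |h η|)) :=
      (continuous_id.mul continuous_const).tendsto 0
    rw [zero_mul] at h1
    exact h1.mono_left nhdsWithin_le_nhds
  have hTto0 : Filter.Tendsto (fun μ => ∑ t ∈ Aᶜ, π μ t) (nhdsWithin 0 (Set.Ioi 0)) (nhds 0) := by
    apply squeeze_zero_norm' _ hg
    apply Filter.eventually_of_mem hIoo
    intro μ hμ
    rw [hT μ hμ, Real.norm_eq_abs, abs_mul, abs_mul, abs_of_pos hμ.1]
    obtain ⟨hM0, hM1⟩ := hM01 μ hμ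
    have h6 : |∑ b ∈ A, π μ b| ≤ 1 := by rw [abs_of_nonneg hM0]; exact hM1
    exact mul_le_of_le_one_right (mul_nonneg hμ.1.le (abs_nonneg _)) h6
  have hMt : Filter.Tendsto (fun μ => ∑ b ∈ A, π μ b) (nhdsWithin 0 (Set.Ioi 0)) (nhds 1) := by
    have h1 : Filter.Tendsto (fun μ => 1 - ∑ t ∈ Aᶜ, π μ t)
        (nhdsWithin 0 (Set.Ioi 0)) (nhds 1) := by
      have := (tendsto_const_nhds (x := (1:ℝ))
        (f := nhdsWithin (0:ℝ) (Set.Ioi 0))).sub hTto0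
      simpa using this
    apply h1.congr'
    apply Filter.eventually_of_mem hIoo
    intro μ hμ
    obtain ⟨_, hsum, _⟩ := hπ μ hμ
    have h7 := Finset.sum_add_sum_compl A (π μ)
    rw [hsum] at h7
    show 1 - ∑ t ∈ Aᶜ, π μ t = ∑ b ∈ A, π μ b
    linarith
  have main : ∀ a ∈ A, Filter.Tendsto (fun μ => π μ a)
      (nhdsWithin 0 (Set.Ioi 0)) (nhds (ρ a η)) := by
    intro a ha
    have h1 : Filter.Tendsto (fun μ => ρ a η * ∑ b ∈ A, π μ b)
        (nhdsWithin 0 (Set.Ioi 0)) (nhds (ρ a η)) := by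
      have := (tendsto_const_nhds (x := ρ a η)
        (f := nhdsWithin (0:ℝ) (Set.Ioi 0))).mul hMt
      simpa using this
    apply h1.congr'
    apply Filter.eventually_of_mem hIoo
    intro μ hμ
    exact (hπa μ hμ a ha).symm
  intro s
  by_cases hs : s ∈ A
  · rw [hA] at hs
    simp only [Finset.mem_insert, Finset.mem_singleton] at hs
    rcases hs with he | he | he | he <;> rw [he]
    · rw [if_pos rfl]; exact main CC hCC
    · rw [if_neg hCCCD.symm, if_pos rfl]; exact main CD hCD
    · rw [if_neg hCCDC.symm, if_neg hCDDC.symm, if_pos rfl]; exact main DC hDC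
    · rw [if_neg hCCDD.symm, if_neg hCDDD.symm, if_neg hDCDD.symm, if_pos rfl]
      exact main DD hDD
  · have hne : ∀ b ∈ A, s ≠ b := fun b hb he => hs (he ▸ hb)
    rw [if_neg (hne CC hCC), if_neg (hne CD hCD), if_neg (hne DC hDC), if_neg (hne DD hDD)]
    apply squeeze_zero_norm' _ hg
    apply Filter.eventually_of_mem hIoo
    intro μ hμ
    obtain ⟨hpos, _, _⟩ := hπ μ hμ
    have h1 : π μ s ≤ ∑ t ∈ Aᶜ, π μ t :=
      Finset.single_le_sum (fun t _ => hpos t) (by simpa using hs)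
    rw [Real.norm_eq_abs, abs_of_nonneg (hpos s)]
    rw [hT μ hμ] at h1
    obtain ⟨hM0, hM1⟩ := hM01 μ hμ
    calc π μ s ≤ μ * h η * ∑ b ∈ A, π μ b := h1
      _ ≤ μ * |h η| := by
          nlinarith [mul_nonneg (mul_nonneg hμ.1.le (sub_nonneg.mpr (le_abs_self (h η)))) hM0,
            mul_nonneg (mul_nonneg hμ.1.le (abs_nonneg (h η))) (sub_nonneg.mpr hM1)]
end

section
/- Balance identity for the amended chain: if π is the stationary distribution of the amended chain P^{ame(η)} and Ω̂₁(s) denotes the expected one-step change in RV-weighted cooperator frequency in layer 1 from state s under the original dynamics, then 0 = E_π[Ω̂₁] + μ(η̂₁ − 1)(π(C×C) + π(C×D)) + μ η̂₁ (π(D×C) + π(D×D)), where η̂₁ = ∑_i v_i η_i is the RV-weighted layer-1 frequency of the restart state η. -/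
/-- Balance identity for the amended chain. If `π` is a stationary
distribution of the amended chain `P^{ame(η)}` (restart at `η` with probability
`μ` from the four monomorphic states), then
`0 = E_π[Ω̂₁] + μ(η̂₁ − 1)(π(C×C) + π(C×D)) + μ η̂₁ (π(D×C) + π(D×D))`,
where `Ω̂₁(s)` is the expected one-step change of the RV-weighted layer-1
cooperator frequency `ŝ₁ = ∑ i, v i * s_{i(1)}` under the original chain. -/
theorem amended_chain_balance_identity (N₁ N₂ : ℕ) (hN₁ : 0 < N₁) (hN₂ : 0 < N₂)
    (v : Fin N₁ → ℝ) (hv : ∑ i, v i = 1)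
    (P : Matrix ((Fin N₁ → Bool) × (Fin N₂ → Bool)) ((Fin N₁ → Bool) × (Fin N₂ → Bool)) ℝ)
    (hP0 : ∀ s t, 0 ≤ P s t) (hP1 : ∀ s, ∑ t, P s t = 1)
    (CC CD DC DD : (Fin N₁ → Bool) × (Fin N₂ → Bool))
    (hCC : CC = (fun _ => true, fun _ => true)) (hCD : CD = (fun _ => true, fun _ => false))
    (hDC : DC = (fun _ => false, fun _ => true)) (hDD : DD = (fun _ => false, fun _ => false))
    (A : Finset ((Fin N₁ → Bool) × (Fin N₂ → Bool))) (hA : A = {CC, CD, DC, DD})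
    (habs : ∀ a ∈ A, ∀ t, P a t = if t = a then 1 else 0)
    (η : (Fin N₁ → Bool) × (Fin N₂ → Bool)) (hη : η ∉ A)
    (μ : ℝ) (hμ : μ ∈ Set.Ioo (0 : ℝ) 1)
    (shat : (Fin N₁ → Bool) × (Fin N₂ → Bool) → ℝ)
    (hshat : ∀ s, shat s = ∑ i, v i * (if s.1 i then (1 : ℝ) else 0))
    (Pame : Matrix ((Fin N₁ → Bool) × (Fin N₂ → Bool)) ((Fin N₁ → Bool) × (Fin N₂ → Bool)) ℝ)
    (hPame : ∀ s t, Pame s t =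
      if s ∈ A then (if t = η then μ else if t = s then 1 - μ else 0) else P s t)
    (π : (Fin N₁ → Bool) × (Fin N₂ → Bool) → ℝ)
    (hπ0 : ∀ s, 0 ≤ π s) (hπ1 : ∑ s, π s = 1)
    (hπstat : ∀ t, ∑ s, π s * Pame s t = π t) :
    0 = (∑ s, π s * (∑ t, P s t * (shat t - shat s)))
      + μ * (shat η - 1) * (π CC + π CD)
      + μ * (shat η) * (π DC + π DD) := by
  classical
  have hCCs : shat CC = 1 := by rw [hshat, hCC]; simpa using hv
  have hCDs : shat CD = 1 := by rw [hshat, hCD]; simpa using hv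
  have hDCs : shat DC = 0 := by rw [hshat, hDC]; simp
  have hDDs : shat DD = 0 := by rw [hshat, hDD]; simp
  have i1 : Fin N₁ := ⟨0, hN₁⟩
  have i2 : Fin N₂ := ⟨0, hN₂⟩
  have h12 : CC ≠ CD := by
    subst hCC hCD; intro h
    exact Bool.noConfusion (congrFun (congrArg Prod.snd h) i2)
  have h13 : CC ≠ DC := by
    subst hCC hDC; intro h
    exact Bool.noConfusion (congrFun (congrArg Prod.fst h) i1)
  have h14 : CC ≠ DD := by
    subst hCC hDD; intro h
    exact Bool.noConfusion (congrFun (congrArg Prod.fst h) i1)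
  have h23 : CD ≠ DC := by
    subst hCD hDC; intro h
    exact Bool.noConfusion (congrFun (congrArg Prod.fst h) i1)
  have h24 : CD ≠ DD := by
    subst hCD hDD; intro h
    exact Bool.noConfusion (congrFun (congrArg Prod.fst h) i1)
  have h34 : DC ≠ DD := by
    subst hDC hDD; intro h
    exact Bool.noConfusion (congrFun (congrArg Prod.snd h) i2)
  have key : ∑ s, π s * shat s = ∑ s, π s * ∑ t, Pame s t * shat t := by
    calc ∑ s, π s * shat s = ∑ t, (∑ s, π s * Pame s t) * shat t := by
          simp_rw [hπstat]
      _ = ∑ s, π s * ∑ t, Pame s t * shat t := by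
          simp_rw [Finset.sum_mul, Finset.mul_sum, mul_assoc]
          rw [Finset.sum_comm]
  have hzero : (0:ℝ) = ∑ s, π s * (∑ t, Pame s t * shat t - shat s) := by
    simp_rw [mul_sub]
    rw [Finset.sum_sub_distrib, ← key]
    ring
  have hval : ∀ s, π s * (∑ t, Pame s t * shat t - shat s)
      = π s * (∑ t, P s t * (shat t - shat s))
        + (if s ∈ A then π s * (μ * (shat η - shat s)) else 0) := by
    intro s
    by_cases hs : s ∈ A
    · have hPs := habs s hs
      have hne : η ≠ s := fun h => hη (h ▸ hs)
      have hPP : ∑ t, P s t * (shat t - shat s) = 0 := by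
        simp [hPs, ite_mul]
      have hPam : ∑ t, Pame s t * shat t = μ * shat η + (1 - μ) * shat s := by
        simp only [hPame, if_pos hs]
        have he : ∀ t, (if t = η then μ else if t = s then 1 - μ else 0) * shat t
            = (if t = η then μ * shat η else 0) + (if t = s then (1 - μ) * shat s else 0) := by
          intro t
          by_cases h1 : t = η
          · subst h1; simp [hne]
          · by_cases h2 : t = s <;> simp [h1, h2, Ne.symm hne]
        simp_rw [he, Finset.sum_add_distrib]
        simp
      rw [hPP, hPam, if_pos hs]; ring
    · rw [if_neg hs]
      simp only [hPame, if_neg hs]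
      have hD : ∑ t, P s t * (shat t - shat s) = (∑ t, P s t * shat t) - shat s := by
        simp_rw [mul_sub]
        rw [Finset.sum_sub_distrib, ← Finset.sum_mul, hP1, one_mul]
      rw [hD]; ring
  have hAsum : ∑ s ∈ A, π s * (μ * (shat η - shat s))
      = π CC * (μ * (shat η - 1)) + π CD * (μ * (shat η - 1))
        + π DC * (μ * shat η) + π DD * (μ * shat η) := by
    rw [hA, Finset.sum_insert (by simp [h12, h13, h14]),
      Finset.sum_insert (by simp [h23, h24]),
      Finset.sum_insert (by simp [h34]), Finset.sum_singleton,
      hCCs, hCDs, hDCs, hDDs]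
    ring
  calc (0:ℝ) = ∑ s, π s * (∑ t, Pame s t * shat t - shat s) := hzero
    _ = (∑ s, π s * (∑ t, P s t * (shat t - shat s)))
        + ∑ s ∈ A, π s * (μ * (shat η - shat s)) := by
        simp_rw [hval]
        rw [Finset.sum_add_distrib, Finset.sum_ite_mem, Finset.univ_inter]
    _ = _ := by rw [hAsum]; ring
end

section
/- Taking the limit μ → 0 in the balance identity yields the fixation-probability formula: ρ_{C×C}(η) + ρ_{C×D}(η) = η̂₁ + ⟨Ω̂₁⟩_η, where ⟨Ω̂₁⟩_η := ∑_{s transient} t_η(s) Ω̂₁(s) is the sojourn-time-weighted total expected change in RV-weighted layer-1 cooperator frequency. -/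
/-- Fixation-probability formula from the μ → 0 limit of the balance
identity: `ρ_{C×C}(η) + ρ_{C×D}(η) = η̂₁ + ⟨Ω̂₁⟩_η`, where
`⟨Ω̂₁⟩_η = ∑_{s transient} t_η(s) Ω̂₁(s)` is the sojourn-time-weighted total
expected change of the RV-weighted layer-1 cooperator frequency. -/
theorem fixation_probability_formula (N₁ N₂ : ℕ) (hN₁ : 0 < N₁) (hN₂ : 0 < N₂)
    (v : Fin N₁ → ℝ) (hv : ∑ i, v i = 1)
    (P : Matrix ((Fin N₁ → Bool) × (Fin N₂ → Bool)) ((Fin N₁ → Bool) × (Fin N₂ → Bool)) ℝ)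
    (hP0 : ∀ s t, 0 ≤ P s t) (hP1 : ∀ s, ∑ t, P s t = 1)
    (CC CD DC DD : (Fin N₁ → Bool) × (Fin N₂ → Bool))
    (hCC : CC = (fun _ => true, fun _ => true)) (hCD : CD = (fun _ => true, fun _ => false))
    (hDC : DC = (fun _ => false, fun _ => true)) (hDD : DD = (fun _ => false, fun _ => false))
    (A : Finset ((Fin N₁ → Bool) × (Fin N₂ → Bool))) (hA : A = {CC, CD, DC, DD})
    (habs : ∀ a ∈ A, ∀ t, P a t = if t = a then 1 else 0)
    (hreach : ∀ s, s ∉ A → ∀ a ∈ A, ∃ n : ℕ, 0 < (P ^ n) s a)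
    (η : (Fin N₁ → Bool) × (Fin N₂ → Bool)) (hη : η ∉ A)
    (shat : (Fin N₁ → Bool) × (Fin N₂ → Bool) → ℝ)
    (hshat : ∀ s, shat s = ∑ i, v i * (if s.1 i then (1 : ℝ) else 0))
    -- absorption probabilities, characterized by boundary values and harmonicity
    (ρCC ρCD : (Fin N₁ → Bool) × (Fin N₂ → Bool) → ℝ)
    (hρCCbd : ∀ a ∈ A, ρCC a = if a = CC then 1 else 0)
    (hρCDbd : ∀ a ∈ A, ρCD a = if a = CD then 1 else 0)
    (hρCCh : ∀ s, s ∉ A → ρCC s = ∑ t, P s t * ρCC t)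
    (hρCDh : ∀ s, s ∉ A → ρCD s = ∑ t, P s t * ρCD t)
    -- sojourn times starting from η
    (tη : (Fin N₁ → Bool) × (Fin N₂ → Bool) → ℝ)
    (htabs : ∀ s ∈ A, tη s = 0)
    (htη : tη η = 1 + ∑ y, tη y * P y η)
    (htother : ∀ s, s ∉ A → s ≠ η → tη s = ∑ y, tη y * P y s) :
    ρCC η + ρCD η = shat η
      + ∑ s ∈ Finset.univ.filter (fun s => s ∉ A),
          tη s * (∑ t, P s t * (shat t - shat s)) := by

  classical
  set T : Finset ((Fin N₁ → Bool) × (Fin N₂ → Bool)) :=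
    Finset.univ.filter (fun s => s ∉ A) with hT
  set m : ((Fin N₁ → Bool) × (Fin N₂ → Bool)) → ℝ := fun a => ∑ s, tη s * P s a with hm
  have hmem : ∀ s, s ∈ T ↔ s ∉ A := by intro s; simp [hT]
  have hm_trans : ∀ t, t ∉ A → m t = tη t - (if t = η then 1 else 0) := by
    intro t ht
    by_cases h : t = η
    · subst h; simp only [hm, eq_self_iff_true, if_true]; linarith [htη]
    · simp only [if_neg h, hm, sub_zero]; rw [htother t ht h]
  have key : ∀ h : ((Fin N₁ → Bool) × (Fin N₂ → Bool)) → ℝ,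
      ∑ s ∈ T, tη s * (∑ t, P s t * h t)
        = (∑ a ∈ A, m a * h a) + (∑ t ∈ T, tη t * h t) - h η := by
    intro h
    have h1 : ∑ s ∈ T, tη s * (∑ t, P s t * h t)
        = ∑ s, tη s * (∑ t, P s t * h t) := by
      rw [hT, Finset.sum_filter]
      apply Finset.sum_congr rfl
      intro s _
      by_cases hs : s ∈ A
      · simp [hs, htabs s hs]
      · simp [hs]
    have h2 : ∑ s, tη s * (∑ t, P s t * h t) = ∑ t, m t * h t := by
      simp_rw [Finset.mul_sum, ← mul_assoc]
      rw [Finset.sum_comm]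
      apply Finset.sum_congr rfl
      intro t _
      rw [hm, ← Finset.sum_mul]
    have h3 : ∑ t, m t * h t = (∑ a ∈ A, m a * h a) + ∑ t ∈ T, m t * h t := by
      rw [← Finset.sum_filter_add_sum_filter_not Finset.univ (fun t => t ∈ A)]
      congr 1
      apply Finset.sum_congr _ (fun _ _ => rfl)
      ext x; simp
    have h4 : ∑ t ∈ T, m t * h t = (∑ t ∈ T, tη t * h t) - h η := by
      rw [Finset.sum_congr rfl (fun t ht => by rw [hm_trans t ((hmem t).1 ht)])]
      simp_rw [sub_mul, ite_mul, one_mul, zero_mul]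
      rw [Finset.sum_sub_distrib]
      congr 1
      rw [Finset.sum_ite_eq' T η h, if_pos ((hmem η).2 hη)]
    rw [h1, h2, h3, h4]; ring
  have habsorb : ∀ (ρ : ((Fin N₁ → Bool) × (Fin N₂ → Bool)) → ℝ)
      (a : (Fin N₁ → Bool) × (Fin N₂ → Bool)), a ∈ A →
      (∀ b ∈ A, ρ b = if b = a then 1 else 0) →
      (∀ s, s ∉ A → ρ s = ∑ t, P s t * ρ t) → ρ η = m a := by
    intro ρ a ha hbd hharm
    have hk := key ρ
    have hL : ∑ s ∈ T, tη s * (∑ t, P s t * ρ t) = ∑ s ∈ T, tη s * ρ s :=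
      Finset.sum_congr rfl (fun s hs => by rw [← hharm s ((hmem s).1 hs)])
    rw [hL] at hk
    have hA' : ∑ b ∈ A, m b * ρ b = m a := by
      rw [Finset.sum_congr rfl (fun b hb => by rw [hbd b hb])]
      simp_rw [mul_ite, mul_one, mul_zero]
      rw [Finset.sum_ite_eq' A a m, if_pos ha]
    rw [hA'] at hk
    linarith
  subst hCC hCD hDC hDD hA
  have hb1 : (fun _ : Fin N₁ => true) ≠ (fun _ => false) := by
    intro h; simpa using congrFun h ⟨0, hN₁⟩
  have hb2 : (fun _ : Fin N₂ => true) ≠ (fun _ => false) := by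
    intro h; simpa using congrFun h ⟨0, hN₂⟩
  have hρ1 : ρCC η = m (fun _ => true, fun _ => true) :=
    habsorb ρCC _ (by simp) hρCCbd hρCCh
  have hρ2 : ρCD η = m (fun _ => true, fun _ => false) :=
    habsorb ρCD _ (by simp) hρCDbd hρCDh
  have hkey := key shat
  have hsumA : ∑ a ∈ ({(fun _ => true, fun _ => true), (fun _ => true, fun _ => false),
      (fun _ => false, fun _ => true), (fun _ => false, fun _ => false)} :
      Finset ((Fin N₁ → Bool) × (Fin N₂ → Bool))), m a * shat a
      = m (fun _ => true, fun _ => true) + m (fun _ => true, fun _ => false) := by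
    rw [Finset.sum_insert (by simp [Prod.ext_iff, hb1, hb2]),
        Finset.sum_insert (by simp [Prod.ext_iff, hb1, hb2]),
        Finset.sum_insert (by simp [Prod.ext_iff, hb1, hb2]),
        Finset.sum_singleton]
    have e1 : shat ((fun _ => true, fun _ => true) :
        (Fin N₁ → Bool) × (Fin N₂ → Bool)) = 1 := by rw [hshat]; simpa using hv
    have e2 : shat ((fun _ => true, fun _ => false) :
        (Fin N₁ → Bool) × (Fin N₂ → Bool)) = 1 := by rw [hshat]; simpa using hv
    have e3 : shat ((fun _ => false, fun _ => true) :
        (Fin N₁ → Bool) × (Fin N₂ → Bool)) = 0 := by rw [hshat]; simp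
    have e4 : shat ((fun _ => false, fun _ => false) :
        (Fin N₁ → Bool) × (Fin N₂ → Bool)) = 0 := by rw [hshat]; simp
    rw [e1, e2, e3, e4]; ring
  rw [hsumA] at hkey
  have hinner : ∀ s, (∑ t, P s t * (shat t - shat s)) = (∑ t, P s t * shat t) - shat s := by
    intro s
    simp_rw [mul_sub]
    rw [Finset.sum_sub_distrib, ← Finset.sum_mul, hP1, one_mul]
  have hgoal : ∑ s ∈ T, tη s * (∑ t, P s t * (shat t - shat s))
      = ∑ s ∈ T, tη s * (∑ t, P s t * shat t) - ∑ s ∈ T, tη s * shat s := by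
    simp_rw [hinner, mul_sub]
    rw [Finset.sum_sub_distrib]
  show ρCC η + ρCD η = shat η + ∑ s ∈ T, tη s * (∑ t, P s t * (shat t - shat s))
  rw [hgoal, hρ1, hρ2]
  linarith
end

section
/- The recursion for pairwise coalescence-type quantities ψ has a unique solution: given a stochastic matrix p on Fin N (p_{ik} ≥ 0, ∑_k p_{ik} = 1) and given constants g_{ij} ∈ ℝ with g_{ii} = 0 and also requiring ψ_{ii} = 0 as boundary condition, the system ψ_{ij} = g_{ij} + (1/2) ∑_k ( p_{ik} ψ_{kj} + p_{jk} ψ_{ik} ) for all i ≠ j, ψ_{ii} = 0, has at most one solution ψ : Fin N × Fin N → ℝ, provided the random walk given by p is irreducible (two independent lazy walkers meet with probability 1). -/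
/-- Maximum principle: a function harmonic off the diagonal (for the lazy
two-walker chain), vanishing on the diagonal, is nonpositive everywhere. -/
lemma pairwise_harmonic_nonpos (N : ℕ)
    (p : Fin N → Fin N → ℝ)
    (hp0 : ∀ i k, 0 ≤ p i k) (hp1 : ∀ i, ∑ k, p i k = 1)
    (hirr : ∀ i j : Fin N, Relation.ReflTransGen (fun a b => 0 < p a b) i j)
    (φ : Fin N → Fin N → ℝ)
    (hd : ∀ i, φ i i = 0)
    (hrec : ∀ i j, i ≠ j →
      φ i j = (1 / 2) * ∑ k, (p i k * φ k j + p j k * φ i k)) :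
    ∀ i j, φ i j ≤ 0 := by
  intro i j
  obtain ⟨⟨i0, j0⟩, -, hmax⟩ := Finset.exists_max_image
    (Finset.univ : Finset (Fin N × Fin N)) (fun q => φ q.1 q.2)
    ⟨(i, j), Finset.mem_univ _⟩
  set M : ℝ := φ i0 j0 with hM
  have hmax' : ∀ a b : Fin N, φ a b ≤ M := fun a b =>
    hmax (a, b) (Finset.mem_univ _)
  -- key: if (a,b) off-diagonal attains M, then any p-successor of a also attains M
  have key : ∀ a b : Fin N, a ≠ b → φ a b = M →
      ∀ k, 0 < p a k → φ k b = M := by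
    intro a b hab habM k hpk
    have hsum : ∑ k, (p a k * (M - φ k b) + p b k * (M - φ a k)) = 0 := by
      have h1 : ∑ k, (p a k * (M - φ k b) + p b k * (M - φ a k))
          = (∑ k, p a k) * M + (∑ k, p b k) * M
            - ∑ k, (p a k * φ k b + p b k * φ a k) := by
        simp only [mul_sub, Finset.sum_add_distrib, Finset.sum_sub_distrib,
          Finset.sum_mul]
        ring
      have h2 := hrec a b hab
      rw [habM] at h2
      rw [h1, hp1 a, hp1 b]
      linarith
    have hnn : ∀ x ∈ (Finset.univ : Finset (Fin N)),
        0 ≤ p a x * (M - φ x b) + p b x * (M - φ a x) := by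
      intro x _
      have h1 : 0 ≤ p a x * (M - φ x b) :=
        mul_nonneg (hp0 a x) (by linarith [hmax' x b])
      have h2 : 0 ≤ p b x * (M - φ a x) :=
        mul_nonneg (hp0 b x) (by linarith [hmax' a x])
      linarith
    have hz := (Finset.sum_eq_zero_iff_of_nonneg hnn).mp hsum k (Finset.mem_univ k)
    have h2 : 0 ≤ p b k * (M - φ a k) :=
      mul_nonneg (hp0 b k) (by linarith [hmax' a k])
    have h1 : 0 ≤ p a k * (M - φ k b) :=
      mul_nonneg (hp0 a k) (by linarith [hmax' k b])
    have h3 : p a k * (M - φ k b) = 0 := by linarith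
    have h4 : M - φ k b = 0 := by
      rcases mul_eq_zero.mp h3 with h | h
      · exact absurd h (ne_of_gt hpk)
      · exact h
    linarith
  -- follow a path from a to b; the max propagates until it hits the diagonal
  have key2 : ∀ a b : Fin N,
      Relation.ReflTransGen (fun x y => 0 < p x y) a b → φ a b = M → M = 0 := by
    intro a b hpath
    induction hpath using Relation.ReflTransGen.head_induction_on with
    | refl => intro h; rw [← h, hd]
    | head hstep _ ih =>
      rename_i a' c _
      intro h
      by_cases hab : a' = b
      · rw [hab, hd] at h; exact h.symm
      · exact ih (key a' b hab h c hstep)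
  have hM0 : M = 0 := key2 i0 j0 (hirr i0 j0) rfl
  calc φ i j ≤ M := hmax' i j
    _ = 0 := hM0

/-- Uniqueness for the pairwise coalescence-type recursion: given a
row-stochastic irreducible `p` and constants `g` with `g_{ii} = 0`, the system
`ψ_{ij} = g_{ij} + (1/2) ∑_k (p_{ik} ψ_{kj} + p_{jk} ψ_{ik})` for `i ≠ j`, with
boundary condition `ψ_{ii} = 0`, has at most one solution. -/
theorem pairwise_recursion_unique (N : ℕ)
    (p : Fin N → Fin N → ℝ)
    (hp0 : ∀ i k, 0 ≤ p i k) (hp1 : ∀ i, ∑ k, p i k = 1)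
    (hirr : ∀ i j : Fin N, Relation.ReflTransGen (fun a b => 0 < p a b) i j)
    (g : Fin N → Fin N → ℝ) (hg : ∀ i, g i i = 0)
    (ψ ψ' : Fin N → Fin N → ℝ)
    (hψd : ∀ i, ψ i i = 0) (hψ'd : ∀ i, ψ' i i = 0)
    (hψ : ∀ i j, i ≠ j →
      ψ i j = g i j + (1 / 2) * ∑ k, (p i k * ψ k j + p j k * ψ i k))
    (hψ' : ∀ i j, i ≠ j →
      ψ' i j = g i j + (1 / 2) * ∑ k, (p i k * ψ' k j + p j k * ψ' i k)) :
    ψ = ψ' := by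
  have hrec : ∀ (φ : Fin N → Fin N → ℝ),
      ((φ = fun i j => ψ i j - ψ' i j) ∨ (φ = fun i j => ψ' i j - ψ i j)) →
      ∀ i j, i ≠ j → φ i j = (1 / 2) * ∑ k, (p i k * φ k j + p j k * φ i k) := by
    intro φ hφ i j hij
    have h1 := hψ i j hij
    have h2 := hψ' i j hij
    have hs : ∑ k, (p i k * ψ k j + p j k * ψ i k)
        - ∑ k, (p i k * ψ' k j + p j k * ψ' i k)
        = ∑ k, (p i k * (ψ k j - ψ' k j) + p j k * (ψ i k - ψ' i k)) := by
      rw [← Finset.sum_sub_distrib]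
      apply Finset.sum_congr rfl
      intro x _
      ring
    rcases hφ with rfl | rfl
    · simp only
      have : ∑ k, (p i k * (ψ k j - ψ' k j) + p j k * (ψ i k - ψ' i k))
          = ∑ k, (p i k * ψ k j + p j k * ψ i k)
            - ∑ k, (p i k * ψ' k j + p j k * ψ' i k) := hs.symm
      rw [this]; linarith
    · simp only
      have hs' : ∑ k, (p i k * (ψ' k j - ψ k j) + p j k * (ψ' i k - ψ i k))
          = ∑ k, (p i k * ψ' k j + p j k * ψ' i k)
            - ∑ k, (p i k * ψ k j + p j k * ψ i k) := by
        rw [← Finset.sum_sub_distrib]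
        apply Finset.sum_congr rfl
        intro x _
        ring
      rw [hs']; linarith
  have h1 := pairwise_harmonic_nonpos N p hp0 hp1 hirr
    (fun i j => ψ i j - ψ' i j) (fun i => by simp [hψd, hψ'd])
    (hrec _ (Or.inl rfl))
  have h2 := pairwise_harmonic_nonpos N p hp0 hp1 hirr
    (fun i j => ψ' i j - ψ i j) (fun i => by simp [hψd, hψ'd])
    (hrec _ (Or.inr rfl))
  funext i j
  have := h1 i j
  have := h2 i j
  linarith
end
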